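/- With the pointwise warped-product curvature data of the setup, and a real L: if R·R = L Q(S,R) holds on V (all operations taken with respect to g), then at least one of the following holds: R̄ = 0, or T = 0, or S̃ = (κ̃/q) g̃ (the fiber data is Einstein). -/

import Mathlib

/- Pointwise algebraic operations used for pseudosymmetry-type curvature conditions. -/
namespace WPS

variable {V : Type} [AddCommGroup V] [Module ℝ V]

/-- The endomorphism `X ∧_A Y` given by `(X ∧_A Y) Z = A(Y,Z) X - A(X,Z) Y`. -/
def wedge (A : V → V → ℝ) (X Y Z : V) : V := A Y Z • X - A X Z • Y

/-- `(D · H)(X₁,X₂,X₃,X₄; X,Y)` for a (0,4)-tensor `H`, where `Dop X Y` is the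
curvature operator `𝒟(X,Y)` of `D`. -/
def dot4 (Dop : V → V → V → V) (H : V → V → V → V → ℝ)
    (X1 X2 X3 X4 X Y : V) : ℝ :=
  -H (Dop X Y X1) X2 X3 X4 - H X1 (Dop X Y X2) X3 X4
    - H X1 X2 (Dop X Y X3) X4 - H X1 X2 X3 (Dop X Y X4)

/-- `(D · H)(X₁,X₂; X,Y)` for a (0,2)-tensor `H`. -/
def dot2 (Dop : V → V → V → V) (H : V → V → ℝ) (X1 X2 X Y : V) : ℝ :=
  -H (Dop X Y X1) X2 - H X1 (Dop X Y X2)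

/-- The Tachibana operator `Q(A,H)` for a (0,4)-tensor `H`. -/
def Q4 (A : V → V → ℝ) (H : V → V → V → V → ℝ) :
    V → V → V → V → V → V → ℝ := dot4 (wedge A) H

/-- The Tachibana operator `Q(A,H)` for a (0,2)-tensor `H`. -/
def Q2 (A : V → V → ℝ) (H : V → V → ℝ) : V → V → V → V → ℝ := dot2 (wedge A) H

/-- Symmetric bilinear form (as a bare function). -/
def SymBilin (A : V → V → ℝ) : Prop :=
  (∀ x y, A x y = A y x) ∧ ∀ y, IsLinearMap ℝ fun x => A x y

/-- Nondegeneracy of a bilinear form. -/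
def Nondeg (g : V → V → ℝ) : Prop := ∀ x, (∀ y, g x y = 0) → x = 0

/-- Algebraic curvature tensor: multilinear, with the antisymmetries, pair symmetry
and first Bianchi identity of a Riemann curvature tensor. -/
def Curv (R : V → V → V → V → ℝ) : Prop :=
  (∀ y z w, IsLinearMap ℝ fun x => R x y z w) ∧
  (∀ x z w, IsLinearMap ℝ fun y => R x y z w) ∧
  (∀ x y w, IsLinearMap ℝ fun z => R x y z w) ∧
  (∀ x y z, IsLinearMap ℝ fun w => R x y z w) ∧
  (∀ x y z w, R x y z w = -R y x z w) ∧
  (∀ x y z w, R x y z w = -R x y w z) ∧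
  (∀ x y z w, R x y z w = R z w x y) ∧
  ∀ x y z w, R x y z w + R y z x w + R z x y w = 0

/-- The Gaussian-type tensor `G(x,y,z,w) = g(x,w) g(y,z) - g(x,z) g(y,w)`. -/
def Gten (g : V → V → ℝ) (x y z w : V) : ℝ := g x w * g y z - g x z * g y w

end WPS

open TensorProduct in
private lemma rankone_trace {V : Type} [AddCommGroup V] [Module ℝ V] [FiniteDimensional ℝ V]
    (φ : V →ₗ[ℝ] ℝ) (a : V) : LinearMap.trace ℝ V (φ.smulRight a) = φ a := by
  have h : φ.smulRight a = dualTensorHom ℝ V V (φ ⊗ₜ a) := by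
    ext x; simp
  rw [h, LinearMap.trace_eq_contract_apply, contractLeft_apply]

theorem stmt12
    {Vb Vf : Type} [AddCommGroup Vb] [Module ℝ Vb] [FiniteDimensional ℝ Vb]
    [AddCommGroup Vf] [Module ℝ Vf] [FiniteDimensional ℝ Vf]
    (p q : ℕ) (hp : 1 ≤ p) (hq : 1 ≤ q) (hn : 3 ≤ p + q)
    (hdb : Module.finrank ℝ Vb = p) (hdf : Module.finrank ℝ Vf = q)
    (gb : Vb → Vb → ℝ) (hgb : WPS.SymBilin gb) (hgbn : WPS.Nondeg gb)
    (gf : Vf → Vf → ℝ) (hgf : WPS.SymBilin gf) (hgfn : WPS.Nondeg gf)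
    (f Δ : ℝ) (hf : 0 < f)
    (T : Vb → Vb → ℝ) (hT : WPS.SymBilin T)
    (Tsh : Vb →ₗ[ℝ] Vb) (hTsh : ∀ x y, gb (Tsh x) y = T x y)
    (Ω : ℝ) (hΩ : Ω = -f * (((q : ℝ) - 1) * Δ + LinearMap.trace ℝ Vb Tsh))
    (Rb : Vb → Vb → Vb → Vb → ℝ) (hRb : WPS.Curv Rb)
    (Rf : Vf → Vf → Vf → Vf → ℝ) (hRf : WPS.Curv Rf)
    (Rbop : Vb → Vb → Vb → Vb) (hRbop : ∀ x y z w, gb (Rbop x y z) w = Rb x y z w)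
    (Rfop : Vf → Vf → Vf → Vf) (hRfop : ∀ x y z w, gf (Rfop x y z) w = Rf x y z w)
    (Sb : Vb → Vb → ℝ)
    (hSb : ∀ y z, ∃ E : Vb →ₗ[ℝ] Vb, (∀ x w, gb (E x) w = Rb x y z w) ∧
      Sb y z = LinearMap.trace ℝ Vb E)
    (Sf : Vf → Vf → ℝ)
    (hSf : ∀ y z, ∃ E : Vf →ₗ[ℝ] Vf, (∀ x w, gf (E x) w = Rf x y z w) ∧
      Sf y z = LinearMap.trace ℝ Vf E)
    (κf : ℝ)
    (hκf : ∃ E : Vf →ₗ[ℝ] Vf, (∀ x y, gf (E x) y = Sf x y) ∧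
      κf = LinearMap.trace ℝ Vf E)
    (gV : Vb × Vf → Vb × Vf → ℝ)
    (hgV : ∀ X Y, gV X Y = gb X.1 Y.1 + f * gf X.2 Y.2)
    (RV : Vb × Vf → Vb × Vf → Vb × Vf → Vb × Vf → ℝ)
    (hRV : ∀ X Y Z W, RV X Y Z W = Rb X.1 Y.1 Z.1 W.1
      + f * (T X.1 Z.1 * gf Y.2 W.2 + T Y.1 W.1 * gf X.2 Z.2
        - T X.1 W.1 * gf Y.2 Z.2 - T Y.1 Z.1 * gf X.2 W.2)
      + f * Rf X.2 Y.2 Z.2 W.2 - f ^ 2 * Δ * WPS.Gten gf X.2 Y.2 Z.2 W.2)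
    (SV : Vb × Vf → Vb × Vf → ℝ)
    (hSV : ∀ X Y, SV X Y = (Sb X.1 Y.1 - (q : ℝ) * T X.1 Y.1)
      + (Sf X.2 Y.2 + Ω * gf X.2 Y.2))
    (Rop : Vb × Vf → Vb × Vf → Vb × Vf → Vb × Vf)
    (hRop : ∀ X Y Z W, gV (Rop X Y Z) W = RV X Y Z W)
    (L : ℝ)
    (hmain : (∀ X1 X2 X3 X4 X Y : Vb × Vf, WPS.dot4 Rop RV X1 X2 X3 X4 X Y
      = L * WPS.Q4 SV RV X1 X2 X3 X4 X Y)) :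
    (∀ x y z w : Vb, Rb x y z w = 0) ∨ (∀ x y : Vb, T x y = 0) ∨ (∀ a b : Vf, Sf a b = (κf / (q : ℝ)) * gf a b) := by
    classical
  obtain ⟨gbsymm, gblin⟩ := hgb
  obtain ⟨gfsymm, gflin⟩ := hgf
  obtain ⟨Tsymm, Tlin⟩ := hT
  obtain ⟨Rb1, Rb2, Rb3, Rb4, _⟩ := hRb
  obtain ⟨Rf1, Rf2, Rf3, Rf4, _⟩ := hRf
  -- zero and smul lemmas for the bilinear forms
  have gb0l : ∀ y, gb 0 y = 0 := fun y => (gblin y).map_zero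
  have gb0r : ∀ x, gb x 0 = 0 := fun x => by rw [gbsymm]; exact gb0l x
  have gbsl : ∀ (k : ℝ) x y, gb (k • x) y = k * gb x y := fun k x y => by
    simpa [smul_eq_mul] using (gblin y).map_smul k x
  have gf0l : ∀ y, gf 0 y = 0 := fun y => (gflin y).map_zero
  have gf0r : ∀ x, gf x 0 = 0 := fun x => by rw [gfsymm]; exact gf0l x
  have gfsl : ∀ (k : ℝ) x y, gf (k • x) y = k * gf x y := fun k x y => by
    simpa [smul_eq_mul] using (gflin y).map_smul k x
  have gfsr : ∀ (k : ℝ) x y, gf x (k • y) = k * gf x y := fun k x y => by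
    rw [gfsymm, gfsl, gfsymm]
  have T0l : ∀ y, T 0 y = 0 := fun y => (Tlin y).map_zero
  have T0r : ∀ x, T x 0 = 0 := fun x => by rw [Tsymm]; exact T0l x
  have Tsl : ∀ (k : ℝ) x y, T (k • x) y = k * T x y := fun k x y => by
    simpa [smul_eq_mul] using (Tlin y).map_smul k x
  have Tsr : ∀ (k : ℝ) x y, T x (k • y) = k * T x y := fun k x y => by
    rw [Tsymm, Tsl, Tsymm]
  -- zero and smul lemmas for the curvature tensors
  have Rb01 : ∀ y z w, Rb 0 y z w = 0 := fun y z w => (Rb1 y z w).map_zero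
  have Rb02 : ∀ x z w, Rb x 0 z w = 0 := fun x z w => (Rb2 x z w).map_zero
  have Rb03 : ∀ x y w, Rb x y 0 w = 0 := fun x y w => (Rb3 x y w).map_zero
  have Rb04 : ∀ x y z, Rb x y z 0 = 0 := fun x y z => (Rb4 x y z).map_zero
  have Rbs4 : ∀ (k : ℝ) x y z w, Rb x y z (k • w) = k * Rb x y z w := fun k x y z w => by
    simpa [smul_eq_mul] using (Rb4 x y z).map_smul k w
  have Rf01 : ∀ y z w, Rf 0 y z w = 0 := fun y z w => (Rf1 y z w).map_zero
  have Rf02 : ∀ x z w, Rf x 0 z w = 0 := fun x z w => (Rf2 x z w).map_zero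
  have Rf03 : ∀ x y w, Rf x y 0 w = 0 := fun x y w => (Rf3 x y w).map_zero
  have Rf04 : ∀ x y z, Rf x y z 0 = 0 := fun x y z => (Rf4 x y z).map_zero
  have Rfs1 : ∀ (k : ℝ) x y z w, Rf (k • x) y z w = k * Rf x y z w := fun k x y z w => by
    simpa [smul_eq_mul] using (Rf1 y z w).map_smul k x
  -- cancellation from nondegeneracy
  have gbcancel : ∀ A B : Vb, (∀ u, gb A u = gb B u) → A = B := by
    intro A B h
    have := hgbn (A - B) (fun u => by rw [(gblin u).map_sub, h, sub_self])
    exact sub_eq_zero.mp this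
  have gfcancel : ∀ A B : Vf, (∀ u, gf A u = gf B u) → A = B := by
    intro A B h
    have := hgfn (A - B) (fun u => by rw [(gflin u).map_sub, h, sub_self])
    exact sub_eq_zero.mp this
  -- Ricci-type zero lemmas
  have Sb0l : ∀ z, Sb 0 z = 0 := by
    intro z
    obtain ⟨E, hE, htr⟩ := hSb 0 z
    have hE0 : E = 0 := LinearMap.ext fun x =>
      hgbn _ (fun w => by rw [hE]; exact Rb02 x z w)
    rw [htr, hE0, map_zero]
  have Sb0r : ∀ y, Sb y 0 = 0 := by
    intro y
    obtain ⟨E, hE, htr⟩ := hSb y 0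
    have hE0 : E = 0 := LinearMap.ext fun x =>
      hgbn _ (fun w => by rw [hE]; exact Rb03 x y w)
    rw [htr, hE0, map_zero]
  have Sf0l : ∀ z, Sf 0 z = 0 := by
    intro z
    obtain ⟨E, hE, htr⟩ := hSf 0 z
    have hE0 : E = 0 := LinearMap.ext fun x =>
      hgfn _ (fun w => by rw [hE]; exact Rf02 x z w)
    rw [htr, hE0, map_zero]
  have Sf0r : ∀ y, Sf y 0 = 0 := by
    intro y
    obtain ⟨E, hE, htr⟩ := hSf y 0
    have hE0 : E = 0 := LinearMap.ext fun x =>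
      hgfn _ (fun w => by rw [hE]; exact Rf03 x y w)
    rw [htr, hE0, map_zero]
  have hq0 : (q : ℝ) ≠ 0 := Nat.cast_ne_zero.mpr (by omega)
  -- the curvature operator of mixed arguments
  have Dcomp : ∀ (w0 : Vb) (b0 : Vf) (Z : Vb × Vf),
      Rop (w0, 0) (0, b0) Z = ((-(f * gf b0 Z.2)) • Tsh w0, T w0 Z.1 • b0) := by
    intro w0 b0 Z
    have h1 : ∀ u : Vb, gb (Rop (w0, 0) (0, b0) Z).1 u
        = gb ((-(f * gf b0 Z.2)) • Tsh w0) u := by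
      intro u
      have h := hRop (w0, 0) (0, b0) Z (u, 0)
      rw [hgV, hRV] at h
      simp only [WPS.Gten, Rb02, gf0l, gf0r, T0l, T0r, Rf02, Rf04, mul_zero, zero_mul,
        add_zero, zero_add, sub_zero, zero_sub, neg_zero] at h
      rw [gbsl, hTsh]
      linear_combination h
    have h2 : ∀ u : Vf, gf (Rop (w0, 0) (0, b0) Z).2 u = gf (T w0 Z.1 • b0) u := by
      intro u
      have h := hRop (w0, 0) (0, b0) Z (0, u)
      rw [hgV, hRV] at h
      simp only [WPS.Gten, Rb02, Rb04, gb0r, gf0l, gf0r, T0l, T0r, Rf01, mul_zero, zero_mul,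
        add_zero, zero_add, sub_zero, zero_sub, neg_zero] at h
      have hf0 : f ≠ 0 := ne_of_gt hf
      rw [gfsl]
      refine mul_left_cancel₀ hf0 ?_
      linear_combination h
    exact Prod.ext (gbcancel _ _ h1) (gfcancel _ _ h2)
  -- key identity A
  have keyA : ∀ (x y z w : Vb) (a b : Vf),
      f * gf b a * (T y z * T w x - T x z * T w y + Rb x y z (Tsh w))
      = L * (f * gf b a * ((Sb w y - (q : ℝ) * T w y) * T x z
            - (Sb w x - (q : ℝ) * T w x) * T y z)
          - (Sf b a + Ω * gf b a) * Rb x y z w) := by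
    intro x y z w a b
    have H := hmain (x, 0) (y, 0) (z, 0) (0, a) (w, 0) (0, b)
    simp only [WPS.dot4, WPS.Q4, WPS.wedge, Dcomp, hRV, hSV, WPS.Gten,
      Prod.smul_mk, Prod.mk_sub_mk, smul_zero, sub_zero, zero_sub, ← neg_smul,
      gf0l, gf0r, gb0l, gb0r, T0l, T0r, Sb0l, Sb0r, Sf0l, Sf0r,
      Rb01, Rb02, Rb03, Rb04, Rf01, Rf02, Rf03, Rf04,
      gfsl, gfsr, gbsl, Tsl, Tsr, Rbs4, Rfs1,
      mul_zero, zero_mul, add_zero, zero_add, sub_zero, zero_sub, neg_zero, neg_neg,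
      mul_neg, neg_mul, smul_eq_mul] at H
    linear_combination H
  -- key identity B (semisymmetric case)
  have keyB : ∀ (x y : Vb) (a b c d : Vf), L = 0 →
      f * T y x * Rf d a b c
      = (f ^ 2 * Δ * T y x - f ^ 2 * T x (Tsh y)) * (gf d c * gf a b - gf d b * gf a c) := by
    intro x y a b c d hL
    have H := hmain (x, 0) (0, a) (0, b) (0, c) (y, 0) (0, d)
    rw [hL, zero_mul] at H
    simp only [WPS.dot4, Dcomp, hRV, WPS.Gten,
      gf0l, gf0r, gb0l, gb0r, T0l, T0r,
      Rb01, Rb02, Rb03, Rb04, Rf01, Rf02, Rf03, Rf04,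
      gfsl, gfsr, gbsl, Tsl, Tsr, Rbs4, Rfs1,
      mul_zero, zero_mul, add_zero, zero_add, sub_zero, zero_sub, neg_zero, neg_neg,
      zero_smul, smul_zero, mul_neg, neg_mul, smul_eq_mul] at H
    linear_combination -H
  -- Einstein conclusion from a proportionality
  have einstein : (∃ lam : ℝ, ∀ a b, Sf a b = lam * gf a b) →
      ∀ a b : Vf, Sf a b = (κf / (q : ℝ)) * gf a b := by
    rintro ⟨lam, hlam⟩ a b
    obtain ⟨E, hE, htr⟩ := hκf
    have hEid : E = lam • LinearMap.id := by
      apply LinearMap.ext; intro x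
      apply gfcancel; intro u
      rw [hE, hlam]
      simp only [LinearMap.smul_apply, LinearMap.id_coe, id_eq, gfsl]
    have hκ : κf = lam * q := by
      rw [htr, hEid, map_smul, LinearMap.trace_id, hdf, smul_eq_mul]
    rw [hlam, hκ]
    field_simp
  by_cases hL : L = 0
  · by_cases hTz : ∀ x y : Vb, T x y = 0
    · exact Or.inr (Or.inl hTz)
    · right; right
      push_neg at hTz
      obtain ⟨x0, y0, hT0⟩ := hTz
      have hTyx : T y0 x0 ≠ 0 := by rw [Tsymm]; exact hT0
      have hf0 : f ≠ 0 := ne_of_gt hf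
      set μ : ℝ := (f ^ 2 * Δ * T y0 x0 - f ^ 2 * T x0 (Tsh y0)) / (f * T y0 x0) with hμ
      have hRfG : ∀ d a b c, Rf d a b c = μ * (gf d c * gf a b - gf d b * gf a c) := by
        intro d a b c
        have H := keyB x0 y0 a b c d hL
        rw [hμ]
        field_simp
        refine mul_left_cancel₀ hf0 ?_
        linear_combination H
      apply einstein
      refine ⟨μ * ((q : ℝ) - 1), ?_⟩
      intro a b
      obtain ⟨E, hE, htr⟩ := hSf a b
      set φ : Vf →ₗ[ℝ] ℝ := IsLinearMap.mk' _ (gflin b) with hφ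
      have hEeq : E = (μ * gf a b) • LinearMap.id - μ • φ.smulRight a := by
        apply LinearMap.ext; intro x
        apply gfcancel; intro u
        rw [hE, hRfG]
        simp only [LinearMap.sub_apply, LinearMap.smul_apply, LinearMap.id_coe, id_eq,
          LinearMap.smulRight_apply, hφ, IsLinearMap.mk'_apply,
          (gflin u).map_sub, gfsl, smul_eq_mul]
        rw [gfsymm a u]
        ring
      rw [htr, hEeq, map_sub, map_smul, map_smul, LinearMap.trace_id, hdf,
        rankone_trace, hφ, IsLinearMap.mk'_apply, smul_eq_mul, smul_eq_mul]
      rw [gfsymm a b]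
      ring
  · by_cases hRbz : ∀ x y z w, Rb x y z w = 0
    · exact Or.inl hRbz
    · right; right
      push_neg at hRbz
      obtain ⟨x0, y0, z0, w0, hR0⟩ := hRbz
      apply einstein
      set A0 : ℝ := T y0 z0 * T w0 x0 - T x0 z0 * T w0 y0 + Rb x0 y0 z0 (Tsh w0) with hA0
      set B0 : ℝ := (Sb w0 y0 - (q : ℝ) * T w0 y0) * T x0 z0
          - (Sb w0 x0 - (q : ℝ) * T w0 x0) * T y0 z0 with hB0
      refine ⟨(L * (f * B0) - f * A0) / (L * Rb x0 y0 z0 w0) - Ω, ?_⟩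
      intro a b
      have H := keyA x0 y0 z0 w0 b a
      rw [← hA0, ← hB0] at H
      have hne : L * Rb x0 y0 z0 w0 ≠ 0 := mul_ne_zero hL hR0
      field_simp
      linear_combination H
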